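/- arXiv:1106.4946 — 2 statements merged into one kernel-verified Lean document; each statement's English description precedes it below -/
import Mathlib

section
/- For all functions F₁, F₂ from pairs of finite subsets of ℝ^d to ℝ and every pair (η⁺,η⁻) of finite subsets of ℝ^d, the ⋆-convolution of the inverse K-transforms equals the inverse K-transform of the pointwise product: ((𝕂⁻¹F₁) ⋆ (𝕂⁻¹F₂))(η⁺,η⁻) = (𝕂⁻¹(F₁·F₂))(η⁺,η⁻). -/
open MeasureTheory Finset ENNReal

noncomputable section

/-- Finite configurations over `ℝ^d`. -/
abbrev Cfg (d : ℕ) := Finset (Fin d → ℝ)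

/-- Two-component `K`-transform. -/
def Ktr {d : ℕ} (G : Cfg d → Cfg d → ℝ) (γp γm : Cfg d) : ℝ :=
  ∑ ηp ∈ γp.powerset, ∑ ηm ∈ γm.powerset, G ηp ηm

/-- Two-component inverse `K`-transform. -/
def Kinv {d : ℕ} (F : Cfg d → Cfg d → ℝ) (ηp ηm : Cfg d) : ℝ :=
  ∑ ξp ∈ ηp.powerset, ∑ ξm ∈ ηm.powerset,
    (-1 : ℝ) ^ ((ηp \ ξp).card + (ηm \ ξm).card) * F ξp ξm

/-- The `⋆`-convolution. -/
def starConv {d : ℕ} (G₁ G₂ : Cfg d → Cfg d → ℝ) (ηp ηm : Cfg d) : ℝ :=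
  ∑ ξp ∈ ηp.powerset, ∑ ξm ∈ ηm.powerset, G₁ ξp ξm *
    ∑ ζp ∈ ξp.powerset, ∑ ζm ∈ ξm.powerset, G₂ ((ηp \ ξp) ∪ ζp) ((ηm \ ξm) ∪ ζm)

/-- The configuration `{x₁,…,xₙ}` associated with a tuple `(x₁,…,xₙ)`. -/
def toCfg {d n : ℕ} (x : Fin n → Fin d → ℝ) : Cfg d := Finset.image x Finset.univ

/-- Two-component Lebesgue–Poisson integral, real-valued version. -/
def lpInt2 {d : ℕ} (F : Cfg d → Cfg d → ℝ) : ℝ :=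
  ∑' (n : ℕ) (m : ℕ), (1 / ((Nat.factorial n : ℝ) * (Nat.factorial m : ℝ))) *
    ∫ x : Fin n → Fin d → ℝ, ∫ y : Fin m → Fin d → ℝ, F (toCfg x) (toCfg y)

/-- Two-component Lebesgue–Poisson integral, `ℝ≥0∞`-valued version. -/
def lpInt2nn {d : ℕ} (F : Cfg d → Cfg d → ℝ≥0∞) : ℝ≥0∞ :=
  ∑' (n : ℕ) (m : ℕ), ((Nat.factorial n * Nat.factorial m : ℕ) : ℝ≥0∞)⁻¹ *
    ∫⁻ x : Fin n → Fin d → ℝ, ∫⁻ y : Fin m → Fin d → ℝ, F (toCfg x) (toCfg y)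

/-- `L_C`-norm of a real-valued function on two-component finite configurations. -/
def normLC {d : ℕ} (C : ℝ) (F : Cfg d → Cfg d → ℝ) : ℝ≥0∞ :=
  lpInt2nn (fun ηp ηm => ENNReal.ofReal (|F ηp ηm| * C ^ (ηp.card + ηm.card)))

/-- `L_C`-norm of an `ℝ≥0∞`-valued function on two-component finite configurations. -/
def normLCnn {d : ℕ} (C : ℝ) (F : Cfg d → Cfg d → ℝ≥0∞) : ℝ≥0∞ :=
  lpInt2nn (fun ηp ηm => F ηp ηm * ENNReal.ofReal (C ^ (ηp.card + ηm.card)))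

/-- Inverse `K`-transform of a shifted one-point rate, e.g. `D±`, `B±`, `A±`. -/
def kerK {d : ℕ} (r : (Fin d → ℝ) → Cfg d → Cfg d → ℝ)
    (x : Fin d → ℝ) (ξp ξm ηp ηm : Cfg d) : ℝ :=
  ∑ ζp ∈ ηp.powerset, ∑ ζm ∈ ηm.powerset,
    (-1 : ℝ) ^ ((ηp \ ζp).card + (ηm \ ζm).card) * r x (ζp ∪ ξp) (ζm ∪ ξm)

/-- Inverse `K`-transform of a shifted two-point rate, e.g. `C₁±`, `C₂±`. -/
def kerK2 {d : ℕ} (c : (Fin d → ℝ) → (Fin d → ℝ) → Cfg d → Cfg d → ℝ)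
    (x y : Fin d → ℝ) (ξp ξm ηp ηm : Cfg d) : ℝ :=
  ∑ ζp ∈ ηp.powerset, ∑ ζm ∈ ηm.powerset,
    (-1 : ℝ) ^ ((ηp \ ζp).card + (ηm \ ζm).card) * c x y (ζp ∪ ξp) (ζm ∪ ξm)

/-- A function of pairs of finite configurations has bounded support. -/
def BddSupp {d : ℕ} (G : Cfg d → Cfg d → ℝ) : Prop :=
  ∃ (Λ : Set (Fin d → ℝ)) (N : ℕ), IsCompact Λ ∧
    ∀ ηp ηm : Cfg d,
      ¬((↑ηp : Set (Fin d → ℝ)) ⊆ Λ ∧ (↑ηm : Set (Fin d → ℝ)) ⊆ Λ ∧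
        ηp.card ≤ N ∧ ηm.card ≤ N) → G ηp ηm = 0

/-- A function of pairs of finite configurations is bounded. -/
def Bdd {d : ℕ} (G : Cfg d → Cfg d → ℝ) : Prop :=
  ∃ Cb : ℝ, ∀ ηp ηm : Cfg d, |G ηp ηm| ≤ Cb

/-- Two-component birth-and-death generator. -/
def LBD {d : ℕ} (dp dm bp bm : (Fin d → ℝ) → Cfg d → Cfg d → ℝ)
    (F : Cfg d → Cfg d → ℝ) (γp γm : Cfg d) : ℝ :=
  (∑ x ∈ γp, dp x (γp.erase x) γm * (F (γp.erase x) γm - F γp γm))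
  + (∫ x, bp x γp γm * (F (insert x γp) γm - F γp γm))
  + (∑ y ∈ γm, dm y γp (γm.erase y) * (F γp (γm.erase y) - F γp γm))
  + (∫ y, bm y γp γm * (F γp (insert y γm) - F γp γm))

/-- Hierarchical birth-and-death operator `L̂`. -/
def hatLBD {d : ℕ} (dp dm bp bm : (Fin d → ℝ) → Cfg d → Cfg d → ℝ)
    (G : Cfg d → Cfg d → ℝ) (ηp ηm : Cfg d) : ℝ :=
  -(∑ ξp ∈ ηp.powerset, ∑ ξm ∈ ηm.powerset, G ξp ξm *
      ((∑ x ∈ ξp, kerK dp x (ξp.erase x) ξm (ηp \ ξp) (ηm \ ξm))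
       + ∑ y ∈ ξm, kerK dm y ξp (ξm.erase y) (ηp \ ξp) (ηm \ ξm)))
  + ∑ ξp ∈ ηp.powerset, ∑ ξm ∈ ηm.powerset,
      ((∫ x, G (insert x ξp) ξm * kerK bp x ξp ξm (ηp \ ξp) (ηm \ ξm))
       + ∫ y, G ξp (insert y ξm) * kerK bm y ξp ξm (ηp \ ξp) (ηm \ ξm))

/-- Adjoint birth-and-death operator `L̂*`. -/
def hatLBDstar {d : ℕ} (dp dm bp bm : (Fin d → ℝ) → Cfg d → Cfg d → ℝ)
    (k : Cfg d → Cfg d → ℝ) (ηp ηm : Cfg d) : ℝ :=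
  -(∑ x ∈ ηp, lpInt2 (fun ξp ξm =>
      k (ηp ∪ ξp) (ηm ∪ ξm) * kerK dp x (ηp.erase x) ηm ξp ξm))
  + (∑ x ∈ ηp, lpInt2 (fun ξp ξm =>
      k ((ηp.erase x) ∪ ξp) (ηm ∪ ξm) * kerK bp x (ηp.erase x) ηm ξp ξm))
  - (∑ y ∈ ηm, lpInt2 (fun ξp ξm =>
      k (ηp ∪ ξp) (ηm ∪ ξm) * kerK dm y ηp (ηm.erase y) ξp ξm))
  + (∑ y ∈ ηm, lpInt2 (fun ξp ξm =>
      k (ηp ∪ ξp) ((ηm.erase y) ∪ ξm) * kerK bm y ηp (ηm.erase y) ξp ξm))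

/-- Mark-preserving hopping generator `L₁`. -/
def Lhop1 {d : ℕ} (c1p c1m : (Fin d → ℝ) → (Fin d → ℝ) → Cfg d → Cfg d → ℝ)
    (F : Cfg d → Cfg d → ℝ) (γp γm : Cfg d) : ℝ :=
  (∑ x ∈ γp, ∫ x', c1p x x' (γp.erase x) γm *
      (F (insert x' (γp.erase x)) γm - F γp γm))
  + (∑ y ∈ γm, ∫ y', c1m y y' γp (γm.erase y) *
      (F γp (insert y' (γm.erase y)) - F γp γm))

/-- Mark-flipping hopping generator `L₂`. -/
def Lhop2 {d : ℕ} (c2p c2m : (Fin d → ℝ) → (Fin d → ℝ) → Cfg d → Cfg d → ℝ)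
    (F : Cfg d → Cfg d → ℝ) (γp γm : Cfg d) : ℝ :=
  (∑ x ∈ γp, ∫ y, c2p x y (γp.erase x) γm *
      (F (γp.erase x) (insert y γm) - F γp γm))
  + (∑ y ∈ γm, ∫ x, c2m x y γp (γm.erase y) *
      (F (insert x γp) (γm.erase y) - F γp γm))

/-- Hierarchical mark-preserving hopping operator `L̂₁`. -/
def hatL1 {d : ℕ} (c1p c1m : (Fin d → ℝ) → (Fin d → ℝ) → Cfg d → Cfg d → ℝ)
    (G : Cfg d → Cfg d → ℝ) (ηp ηm : Cfg d) : ℝ :=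
  (∑ ξp ∈ ηp.powerset, ∑ ξm ∈ ηm.powerset, ∑ x ∈ ξp, ∫ x',
      (G (insert x' (ξp.erase x)) ξm - G ξp ξm) *
        kerK2 c1p x x' (ξp.erase x) ξm (ηp \ ξp) (ηm \ ξm))
  + (∑ ξp ∈ ηp.powerset, ∑ ξm ∈ ηm.powerset, ∑ y ∈ ξm, ∫ y',
      (G ξp (insert y' (ξm.erase y)) - G ξp ξm) *
        kerK2 c1m y y' ξp (ξm.erase y) (ηp \ ξp) (ηm \ ξm))

/-- Hierarchical mark-flipping hopping operator `L̂₂`. -/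
def hatL2 {d : ℕ} (c2p c2m : (Fin d → ℝ) → (Fin d → ℝ) → Cfg d → Cfg d → ℝ)
    (G : Cfg d → Cfg d → ℝ) (ηp ηm : Cfg d) : ℝ :=
  (∑ ξp ∈ ηp.powerset, ∑ ξm ∈ ηm.powerset, ∑ x ∈ ξp, ∫ y,
      (G (ξp.erase x) (insert y ξm) - G ξp ξm) *
        kerK2 c2p x y (ξp.erase x) ξm (ηp \ ξp) (ηm \ ξm))
  + (∑ ξp ∈ ηp.powerset, ∑ ξm ∈ ηm.powerset, ∑ y ∈ ξm, ∫ x,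
      (G (insert x ξp) (ξm.erase y) - G ξp ξm) *
        kerK2 c2m x y ξp (ξm.erase y) (ηp \ ξp) (ηm \ ξm))

/-- Adjoint mark-preserving hopping operator `L̂₁*`. -/
def hatL1star {d : ℕ} (c1p c1m : (Fin d → ℝ) → (Fin d → ℝ) → Cfg d → Cfg d → ℝ)
    (k : Cfg d → Cfg d → ℝ) (ηp ηm : Cfg d) : ℝ :=
  (∑ x ∈ ηp, lpInt2 (fun ξp ξm => ∫ x',
      k ((ξp ∪ ηp ∪ {x'}).erase x) (ξm ∪ ηm) * kerK2 c1p x' x (ηp.erase x) ηm ξp ξm))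
  - (∑ x ∈ ηp, lpInt2 (fun ξp ξm =>
      k (ξp ∪ ηp) (ξm ∪ ηm) * ∫ x', kerK2 c1p x x' (ηp.erase x) ηm ξp ξm))
  + (∑ y ∈ ηm, lpInt2 (fun ξp ξm => ∫ y',
      k (ξp ∪ ηp) ((ξm ∪ ηm ∪ {y'}).erase y) * kerK2 c1m y' y ηp (ηm.erase y) ξp ξm))
  - (∑ y ∈ ηm, lpInt2 (fun ξp ξm =>
      k (ξp ∪ ηp) (ξm ∪ ηm) * ∫ y', kerK2 c1m y y' ηp (ηm.erase y) ξp ξm))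

/-- Adjoint mark-flipping hopping operator `L̂₂*`. -/
def hatL2star {d : ℕ} (c2p c2m : (Fin d → ℝ) → (Fin d → ℝ) → Cfg d → Cfg d → ℝ)
    (k : Cfg d → Cfg d → ℝ) (ηp ηm : Cfg d) : ℝ :=
  (∑ y ∈ ηm, lpInt2 (fun ξp ξm => ∫ x,
      k (ξp ∪ ηp ∪ {x}) ((ξm ∪ ηm).erase y) * kerK2 c2p x y ηp (ηm.erase y) ξp ξm))
  - (∑ x ∈ ηp, lpInt2 (fun ξp ξm =>
      k (ξp ∪ ηp) (ξm ∪ ηm) * ∫ y, kerK2 c2p x y (ηp.erase x) ηm ξp ξm))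
  + (∑ x ∈ ηp, lpInt2 (fun ξp ξm => ∫ y,
      k ((ξp ∪ ηp).erase x) (ξm ∪ ηm ∪ {y}) * kerK2 c2m x y (ηp.erase x) ηm ξp ξm))
  - (∑ y ∈ ηm, lpInt2 (fun ξp ξm =>
      k (ξp ∪ ηp) (ξm ∪ ηm) * ∫ x, kerK2 c2m x y ηp (ηm.erase y) ξp ξm))

/-- Flipping generator `L₀`. -/
def Lflip {d : ℕ} (ap am : (Fin d → ℝ) → Cfg d → Cfg d → ℝ)
    (F : Cfg d → Cfg d → ℝ) (γp γm : Cfg d) : ℝ :=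
  (∑ x ∈ γp, ap x (γp.erase x) γm * (F (γp.erase x) (insert x γm) - F γp γm))
  + (∑ y ∈ γm, am y γp (γm.erase y) * (F (insert y γp) (γm.erase y) - F γp γm))

section AuxSC
variable {α : Type*} [DecidableEq α]

lemma sc_negOne (γ : Finset α) :
    ∑ μ ∈ γ.powerset, (-1 : ℝ) ^ μ.card = if γ = ∅ then 1 else 0 := by
  have h := Finset.sum_powerset_neg_one_pow_card (x := γ)
  have h2 : ((∑ μ ∈ γ.powerset, (-1 : ℤ) ^ μ.card : ℤ) : ℝ)
      = ∑ μ ∈ γ.powerset, (-1 : ℝ) ^ μ.card := by push_cast; rfl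
  rw [← h2, h]; split_ifs <;> simp

lemma sc_reindexU {β : Type*} [AddCommMonoid β] (ξ γ : Finset α) (h : ξ ⊆ γ)
    (f : Finset α → β) :
    ∑ η ∈ γ.powerset.filter (fun η => ξ ⊆ η), f η
      = ∑ μ ∈ (γ \ ξ).powerset, f (ξ ∪ μ) := by
  refine Finset.sum_nbij' (fun η => η \ ξ) (fun μ => ξ ∪ μ) ?_ ?_ ?_ ?_ ?_
  · intro η hη
    simp only [Finset.mem_filter, Finset.mem_powerset] at hη ⊢
    exact Finset.sdiff_subset_sdiff hη.1 (Finset.Subset.refl ξ)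
  · intro μ hμ
    simp only [Finset.mem_filter, Finset.mem_powerset] at hμ ⊢
    exact ⟨Finset.union_subset h (hμ.trans (Finset.sdiff_subset)), Finset.subset_union_left⟩
  · intro η hη
    simp only [Finset.mem_filter, Finset.mem_powerset] at hη
    exact Finset.union_sdiff_of_subset hη.2
  · intro μ hμ
    simp only [Finset.mem_powerset] at hμ
    exact Finset.union_sdiff_cancel_left
      (Finset.disjoint_of_subset_right hμ Finset.disjoint_sdiff)
  · intro η hη
    simp only [Finset.mem_filter, Finset.mem_powerset] at hη
    rw [Finset.union_sdiff_of_subset hη.2]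

lemma sc_reindexC {β : Type*} [AddCommMonoid β] (ξ γ : Finset α) (h : ξ ⊆ γ)
    (f : Finset α → β) :
    ∑ η ∈ γ.powerset.filter (fun η => ξ ⊆ η), f η
      = ∑ μ ∈ (γ \ ξ).powerset, f (γ \ μ) := by
  refine Finset.sum_nbij' (fun η => γ \ η) (fun μ => γ \ μ) ?_ ?_ ?_ ?_ ?_
  · intro η hη
    simp only [Finset.mem_filter, Finset.mem_powerset] at hη ⊢
    exact Finset.sdiff_subset_sdiff (Finset.Subset.refl γ) hη.2
  · intro μ hμ
    simp only [Finset.mem_filter, Finset.mem_powerset] at hμ ⊢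
    refine ⟨Finset.sdiff_subset, Finset.subset_sdiff.2 ⟨h, ?_⟩⟩
    exact Finset.disjoint_of_subset_right hμ Finset.disjoint_sdiff
  · intro η hη
    simp only [Finset.mem_filter, Finset.mem_powerset] at hη
    exact Finset.sdiff_sdiff_eq_self hη.1
  · intro μ hμ
    simp only [Finset.mem_powerset] at hμ
    exact Finset.sdiff_sdiff_eq_self (hμ.trans Finset.sdiff_subset)
  · intro η hη
    simp only [Finset.mem_filter, Finset.mem_powerset] at hη
    rw [Finset.sdiff_sdiff_eq_self hη.1]

lemma sc_core1 (ξ γ : Finset α) (h : ξ ⊆ γ) :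
    ∑ η ∈ γ.powerset.filter (fun η => ξ ⊆ η), (-1 : ℝ) ^ ((γ \ η).card)
      = if γ = ξ then 1 else 0 := by
  rw [sc_reindexC ξ γ h (fun η => (-1 : ℝ) ^ ((γ \ η).card))]
  have e : ∀ μ ∈ (γ \ ξ).powerset, (-1 : ℝ) ^ ((γ \ (γ \ μ)).card) = (-1 : ℝ) ^ μ.card := by
    intro μ hμ
    rw [Finset.sdiff_sdiff_eq_self ((Finset.mem_powerset.1 hμ).trans Finset.sdiff_subset)]
  rw [Finset.sum_congr rfl e, sc_negOne]
  refine if_congr ?_ rfl rfl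
  rw [Finset.sdiff_eq_empty_iff_subset]
  exact ⟨fun h2 => Finset.Subset.antisymm h2 h, fun h2 => h2 ▸ Finset.Subset.refl γ⟩

lemma sc_core2 (ξ γ : Finset α) (h : ξ ⊆ γ) :
    ∑ η ∈ γ.powerset.filter (fun η => ξ ⊆ η), (-1 : ℝ) ^ ((η \ ξ).card)
      = if γ = ξ then 1 else 0 := by
  rw [sc_reindexU ξ γ h (fun η => (-1 : ℝ) ^ ((η \ ξ).card))]
  have e : ∀ μ ∈ (γ \ ξ).powerset, (-1 : ℝ) ^ (((ξ ∪ μ) \ ξ).card) = (-1 : ℝ) ^ μ.card := by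
    intro μ hμ
    rw [Finset.union_sdiff_cancel_left
      (Finset.disjoint_of_subset_right (Finset.mem_powerset.1 hμ) Finset.disjoint_sdiff)]
  rw [Finset.sum_congr rfl e, sc_negOne]
  refine if_congr ?_ rfl rfl
  rw [Finset.sdiff_eq_empty_iff_subset]
  exact ⟨fun h2 => Finset.Subset.antisymm h2 h, fun h2 => h2 ▸ Finset.Subset.refl γ⟩

lemma sc_swap {β : Type*} [AddCommMonoid β] (γ : Finset α) (f : Finset α → Finset α → β) :
    ∑ η ∈ γ.powerset, ∑ ξ ∈ η.powerset, f η ξ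
      = ∑ ξ ∈ γ.powerset, ∑ η ∈ γ.powerset.filter (fun η => ξ ⊆ η), f η ξ := by
  refine Finset.sum_comm' ?_
  intro η ξ
  simp only [Finset.mem_powerset, Finset.mem_filter]
  exact ⟨fun ⟨h1, h2⟩ => ⟨⟨h1, h2⟩, h2.trans h1⟩, fun ⟨⟨h1, h2⟩, _⟩ => ⟨h1, h2⟩⟩

lemma sc_split {β : Type*} [AddCommMonoid β] (s t : Finset α) (hd : Disjoint s t)
    (g : Finset α → β) :
    ∑ μ ∈ s.powerset, ∑ ζ ∈ t.powerset, g (μ ∪ ζ) = ∑ T ∈ (s ∪ t).powerset, g T := by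
  rw [← Finset.sum_product' (s := s.powerset) (t := t.powerset)
    (f := fun μ ζ => g (μ ∪ ζ))]
  refine Finset.sum_nbij' (fun p => p.1 ∪ p.2) (fun T => (T ∩ s, T ∩ t)) ?_ ?_ ?_ ?_ ?_
  · intro p hp
    simp only [Finset.mem_product, Finset.mem_powerset] at hp ⊢
    exact Finset.union_subset_union hp.1 hp.2
  · intro T hT
    simp only [Finset.mem_product, Finset.mem_powerset] at hT ⊢
    exact ⟨Finset.inter_subset_right, Finset.inter_subset_right⟩
  · intro p hp
    simp only [Finset.mem_product, Finset.mem_powerset] at hp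
    have h1 : (p.1 ∪ p.2) ∩ s = p.1 := by
      rw [Finset.union_inter_distrib_right, Finset.inter_eq_left.2 hp.1,
        Finset.disjoint_iff_inter_eq_empty.1 (Finset.disjoint_of_subset_left hp.2 hd.symm),
        Finset.union_empty]
    have h2 : (p.1 ∪ p.2) ∩ t = p.2 := by
      rw [Finset.union_inter_distrib_right, Finset.inter_eq_left.2 hp.2,
        Finset.disjoint_iff_inter_eq_empty.1 (Finset.disjoint_of_subset_left hp.1 hd),
        Finset.empty_union]
    exact Prod.ext h1 h2
  · intro T hT
    simp only [Finset.mem_powerset] at hT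
    show T ∩ s ∪ T ∩ t = T
    rw [← Finset.inter_union_distrib_left, Finset.inter_eq_left.2 hT]
  · intro p hp; rfl

lemma sc_lemA (γ : Finset α) (f : Finset α → ℝ) :
    ∑ η ∈ γ.powerset, ∑ ξ ∈ η.powerset, (-1 : ℝ) ^ ((η \ ξ).card) * f ξ = f γ := by
  rw [sc_swap γ (fun η ξ => (-1 : ℝ) ^ ((η \ ξ).card) * f ξ)]
  have e : ∀ ξ ∈ γ.powerset,
      ∑ η ∈ γ.powerset.filter (fun η => ξ ⊆ η), (-1 : ℝ) ^ ((η \ ξ).card) * f ξ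
        = if ξ = γ then f ξ else 0 := by
    intro ξ hξ
    rw [← Finset.sum_mul, sc_core2 ξ γ (Finset.mem_powerset.1 hξ)]
    by_cases hc : γ = ξ
    · simp [hc]
    · rw [if_neg hc, if_neg (fun h => hc h.symm), zero_mul]
  rw [Finset.sum_congr rfl e, Finset.sum_ite_eq' γ.powerset γ f]
  simp

lemma sc_lemB (η : Finset α) (g : Finset α → ℝ) :
    ∑ ξ ∈ η.powerset, (-1 : ℝ) ^ ((η \ ξ).card) * ∑ ζ ∈ ξ.powerset, g ζ = g η := by
  have e1 : ∀ ξ ∈ η.powerset,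
      (-1 : ℝ) ^ ((η \ ξ).card) * ∑ ζ ∈ ξ.powerset, g ζ
        = ∑ ζ ∈ ξ.powerset, (-1 : ℝ) ^ ((η \ ξ).card) * g ζ := fun ξ _ => Finset.mul_sum ..
  rw [Finset.sum_congr rfl e1,
    sc_swap η (fun ξ ζ => (-1 : ℝ) ^ ((η \ ξ).card) * g ζ)]
  have e2 : ∀ ζ ∈ η.powerset,
      ∑ ξ ∈ η.powerset.filter (fun ξ => ζ ⊆ ξ), (-1 : ℝ) ^ ((η \ ξ).card) * g ζ
        = if ζ = η then g ζ else 0 := by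
    intro ζ hζ
    rw [← Finset.sum_mul, sc_core1 ζ η (Finset.mem_powerset.1 hζ)]
    by_cases hc : η = ζ
    · simp [hc]
    · rw [if_neg hc, if_neg (fun h => hc h.symm), zero_mul]
  rw [Finset.sum_congr rfl e2, Finset.sum_ite_eq' η.powerset η g]
  simp

lemma sc_lemC (γ ξ : Finset α) (h : ξ ⊆ γ) (g : Finset α → ℝ) :
    ∑ η ∈ γ.powerset.filter (fun η => ξ ⊆ η), ∑ ζ ∈ ξ.powerset, g ((η \ ξ) ∪ ζ)
      = ∑ T ∈ γ.powerset, g T := by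
  rw [sc_reindexU ξ γ h (fun η => ∑ ζ ∈ ξ.powerset, g ((η \ ξ) ∪ ζ))]
  have e : ∀ μ ∈ (γ \ ξ).powerset,
      ∑ ζ ∈ ξ.powerset, g (((ξ ∪ μ) \ ξ) ∪ ζ) = ∑ ζ ∈ ξ.powerset, g (μ ∪ ζ) := by
    intro μ hμ
    rw [Finset.union_sdiff_cancel_left
      (Finset.disjoint_of_subset_right (Finset.mem_powerset.1 hμ) Finset.disjoint_sdiff)]
  rw [Finset.sum_congr rfl e, sc_split (γ \ ξ) ξ Finset.sdiff_disjoint g,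
    Finset.sdiff_union_of_subset h]

end AuxSC

theorem sc_Ktr_Kinv {d : ℕ} (F : Cfg d → Cfg d → ℝ) (γp γm : Cfg d) :
    Ktr (Kinv F) γp γm = F γp γm := by
  unfold Ktr Kinv
  have h1 : ∀ ηp ∈ γp.powerset,
      ∑ ηm ∈ γm.powerset, ∑ ξp ∈ ηp.powerset, ∑ ξm ∈ ηm.powerset,
        (-1 : ℝ) ^ ((ηp \ ξp).card + (ηm \ ξm).card) * F ξp ξm
      = ∑ ξp ∈ ηp.powerset, (-1 : ℝ) ^ ((ηp \ ξp).card) * F ξp γm := by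
    intro ηp _
    rw [Finset.sum_comm]
    refine Finset.sum_congr rfl fun ξp _ => ?_
    have e : ∀ ηm ∈ γm.powerset,
        ∑ ξm ∈ ηm.powerset, (-1 : ℝ) ^ ((ηp \ ξp).card + (ηm \ ξm).card) * F ξp ξm
        = ∑ ξm ∈ ηm.powerset,
            (-1 : ℝ) ^ ((ηp \ ξp).card) * ((-1 : ℝ) ^ ((ηm \ ξm).card) * F ξp ξm) := by
      intro ηm _
      refine Finset.sum_congr rfl fun ξm _ => ?_
      rw [pow_add]; ring
    calc ∑ ηm ∈ γm.powerset, ∑ ξm ∈ ηm.powerset,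
          (-1 : ℝ) ^ ((ηp \ ξp).card + (ηm \ ξm).card) * F ξp ξm
        = ∑ ηm ∈ γm.powerset, (-1 : ℝ) ^ ((ηp \ ξp).card) *
            ∑ ξm ∈ ηm.powerset, (-1 : ℝ) ^ ((ηm \ ξm).card) * F ξp ξm := by
          rw [Finset.sum_congr rfl e]
          exact Finset.sum_congr rfl fun ηm _ => (Finset.mul_sum ..).symm
      _ = (-1 : ℝ) ^ ((ηp \ ξp).card) *
            ∑ ηm ∈ γm.powerset, ∑ ξm ∈ ηm.powerset,
              (-1 : ℝ) ^ ((ηm \ ξm).card) * F ξp ξm := (Finset.mul_sum ..).symm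
      _ = (-1 : ℝ) ^ ((ηp \ ξp).card) * F ξp γm := by rw [sc_lemA γm (F ξp)]
  rw [Finset.sum_congr rfl h1]
  exact sc_lemA γp (fun ξp => F ξp γm)

theorem sc_Kinv_Ktr {d : ℕ} (G : Cfg d → Cfg d → ℝ) (ηp ηm : Cfg d) :
    Kinv (Ktr G) ηp ηm = G ηp ηm := by
  unfold Kinv Ktr
  have h1 : ∀ ξp ∈ ηp.powerset,
      ∑ ξm ∈ ηm.powerset, (-1 : ℝ) ^ ((ηp \ ξp).card + (ηm \ ξm).card) *
        ∑ ζp ∈ ξp.powerset, ∑ ζm ∈ ξm.powerset, G ζp ζm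
      = (-1 : ℝ) ^ ((ηp \ ξp).card) * ∑ ζp ∈ ξp.powerset, G ζp ηm := by
    intro ξp _
    have e : ∀ ξm ∈ ηm.powerset,
        (-1 : ℝ) ^ ((ηp \ ξp).card + (ηm \ ξm).card) *
          ∑ ζp ∈ ξp.powerset, ∑ ζm ∈ ξm.powerset, G ζp ζm
        = (-1 : ℝ) ^ ((ηp \ ξp).card) *
            ∑ ζp ∈ ξp.powerset,
              (-1 : ℝ) ^ ((ηm \ ξm).card) * ∑ ζm ∈ ξm.powerset, G ζp ζm := by
      intro ξm _
      rw [Finset.mul_sum, Finset.mul_sum]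
      refine Finset.sum_congr rfl fun ζp _ => ?_
      rw [pow_add]; ring
    rw [Finset.sum_congr rfl e, ← Finset.mul_sum]
    congr 1
    rw [Finset.sum_comm]
    exact Finset.sum_congr rfl fun ζp _ => sc_lemB ηm (G ζp)
  rw [Finset.sum_congr rfl h1]
  exact sc_lemB ηp (fun ζp => G ζp ηm)

theorem sc_Ktr_star {d : ℕ} (G₁ G₂ : Cfg d → Cfg d → ℝ) (γp γm : Cfg d) :
    Ktr (starConv G₁ G₂) γp γm = Ktr G₁ γp γm * Ktr G₂ γp γm := by
  unfold Ktr starConv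
  -- Step B : collapse the minus component for fixed ηp
  have hB : ∀ ηp ∈ γp.powerset,
      ∑ ηm ∈ γm.powerset, ∑ ξp ∈ ηp.powerset, ∑ ξm ∈ ηm.powerset, G₁ ξp ξm *
          ∑ ζp ∈ ξp.powerset, ∑ ζm ∈ ξm.powerset,
            G₂ ((ηp \ ξp) ∪ ζp) ((ηm \ ξm) ∪ ζm)
      = ∑ ξp ∈ ηp.powerset, ∑ ξm ∈ γm.powerset, G₁ ξp ξm *
          ∑ ζp ∈ ξp.powerset, ∑ Tm ∈ γm.powerset, G₂ ((ηp \ ξp) ∪ ζp) Tm := by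
    intro ηp _
    rw [Finset.sum_comm]
    refine Finset.sum_congr rfl fun ξp _ => ?_
    rw [sc_swap γm (fun ηm ξm => G₁ ξp ξm *
      ∑ ζp ∈ ξp.powerset, ∑ ζm ∈ ξm.powerset, G₂ ((ηp \ ξp) ∪ ζp) ((ηm \ ξm) ∪ ζm))]
    refine Finset.sum_congr rfl fun ξm hξm => ?_
    rw [← Finset.mul_sum]
    congr 1
    calc ∑ ηm ∈ γm.powerset.filter (fun ηm => ξm ⊆ ηm),
          ∑ ζp ∈ ξp.powerset, ∑ ζm ∈ ξm.powerset, G₂ ((ηp \ ξp) ∪ ζp) ((ηm \ ξm) ∪ ζm)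
        = ∑ ζp ∈ ξp.powerset, ∑ ηm ∈ γm.powerset.filter (fun ηm => ξm ⊆ ηm),
            ∑ ζm ∈ ξm.powerset, G₂ ((ηp \ ξp) ∪ ζp) ((ηm \ ξm) ∪ ζm) := Finset.sum_comm
      _ = ∑ ζp ∈ ξp.powerset, ∑ Tm ∈ γm.powerset, G₂ ((ηp \ ξp) ∪ ζp) Tm := by
          refine Finset.sum_congr rfl fun ζp _ => ?_
          exact sc_lemC γm ξm (Finset.mem_powerset.1 hξm)
            (fun Tm => G₂ ((ηp \ ξp) ∪ ζp) Tm)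
  rw [Finset.sum_congr rfl hB,
    sc_swap γp (fun ηp ξp => ∑ ξm ∈ γm.powerset, G₁ ξp ξm *
      ∑ ζp ∈ ξp.powerset, ∑ Tm ∈ γm.powerset, G₂ ((ηp \ ξp) ∪ ζp) Tm)]
  -- Step C : collapse the plus component
  have hC : ∀ ξp ∈ γp.powerset,
      ∑ ηp ∈ γp.powerset.filter (fun ηp => ξp ⊆ ηp),
        ∑ ξm ∈ γm.powerset, G₁ ξp ξm *
          ∑ ζp ∈ ξp.powerset, ∑ Tm ∈ γm.powerset, G₂ ((ηp \ ξp) ∪ ζp) Tm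
      = ∑ ξm ∈ γm.powerset, G₁ ξp ξm *
          (∑ Tp ∈ γp.powerset, ∑ Tm ∈ γm.powerset, G₂ Tp Tm) := by
    intro ξp hξp
    rw [Finset.sum_comm]
    refine Finset.sum_congr rfl fun ξm _ => ?_
    rw [← Finset.mul_sum]
    congr 1
    exact sc_lemC γp ξp (Finset.mem_powerset.1 hξp)
      (fun Tp => ∑ Tm ∈ γm.powerset, G₂ Tp Tm)
  rw [Finset.sum_congr rfl hC]
  have hfin : ∀ ξp ∈ γp.powerset,
      ∑ ξm ∈ γm.powerset, G₁ ξp ξm *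
        (∑ Tp ∈ γp.powerset, ∑ Tm ∈ γm.powerset, G₂ Tp Tm)
      = (∑ ξm ∈ γm.powerset, G₁ ξp ξm) *
        (∑ Tp ∈ γp.powerset, ∑ Tm ∈ γm.powerset, G₂ Tp Tm) :=
    fun ξp _ => (Finset.sum_mul ..).symm
  rw [Finset.sum_congr rfl hfin, ← Finset.sum_mul]

/-- the `⋆`-convolution of inverse `𝕂`-transforms is the inverse
`𝕂`-transform of the pointwise product. -/
theorem starConv_Kinv {d : ℕ} (F₁ F₂ : Cfg d → Cfg d → ℝ) (ηp ηm : Cfg d) :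
    starConv (Kinv F₁) (Kinv F₂) ηp ηm
      = Kinv (fun ζp ζm => F₁ ζp ζm * F₂ ζp ζm) ηp ηm := by
  have key : Ktr (starConv (Kinv F₁) (Kinv F₂)) = fun γp γm => F₁ γp γm * F₂ γp γm := by
    funext γp γm
    rw [sc_Ktr_star, sc_Ktr_Kinv, sc_Ktr_Kinv]
  calc starConv (Kinv F₁) (Kinv F₂) ηp ηm
      = Kinv (Ktr (starConv (Kinv F₁) (Kinv F₂))) ηp ηm :=
        (sc_Kinv_Ktr (starConv (Kinv F₁) (Kinv F₂)) ηp ηm).symm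
    _ = _ := by rw [key]
end
end

section
/- The ⋆-convolution makes the real-valued functions of pairs of finite subsets of ℝ^d into a commutative, associative algebra with unit: for all such functions G₁, G₂, G₃ and all pairs (η⁺,η⁻) of finite subsets, (i) (G₁⋆G₂)(η⁺,η⁻) equals the partition form ∑ G₁(η₁⁺∪η₂⁺, η₁⁻∪η₂⁻)·G₂(η₂⁺∪η₃⁺, η₂⁻∪η₃⁻), where the sum runs over all ordered decompositions of η⁺ into three pairwise disjoint (possibly empty) parts (η₁⁺,η₂⁺,η₃⁺) with union η⁺ and likewise of η⁻ into (η₁⁻,η₂⁻,η₃⁻); (ii) G₁⋆G₂ = G₂⋆G₁; (iii) (G₁⋆G₂)⋆G₃ = G₁⋆(G₂⋆G₃); and (iv) G₁⋆e = G₁, where e(η⁺,η⁻) = 1 if η⁺ = ∅ and η⁻ = ∅, and e(η⁺,η⁻) = 0 otherwise. -/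
open MeasureTheory Finset ENNReal

noncomputable section

section StarConvAux
open Finset
variable {α : Type*} [DecidableEq α]

lemma neg_pow_sum (s : Finset α) :
    ∑ t ∈ s.powerset, (-1 : ℝ) ^ (s \ t).card = if s = ∅ then 1 else 0 := by
  have h : ∀ t ∈ s.powerset, (-1 : ℝ) ^ (s \ t).card = (-1) ^ s.card * (-1) ^ t.card := by
    intro t ht
    have hts := mem_powerset.mp ht
    have hcle := card_le_card hts
    have hc : (s \ t).card + t.card = s.card := by
      rw [card_sdiff_of_subset hts]; omega
    have ht2 : ((-1:ℝ)) ^ t.card * (-1) ^ t.card = 1 := by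
      rw [← pow_add]; exact Even.neg_one_pow ⟨t.card, rfl⟩
    calc (-1:ℝ) ^ (s \ t).card = (-1) ^ (s \ t).card * ((-1) ^ t.card * (-1) ^ t.card) := by
          rw [ht2, mul_one]
      _ = (-1) ^ ((s \ t).card + t.card) * (-1) ^ t.card := by rw [pow_add, mul_assoc]
      _ = (-1) ^ s.card * (-1) ^ t.card := by rw [hc]
  rw [Finset.sum_congr rfl h, ← mul_sum]
  have h2 : ((∑ m ∈ s.powerset, (-1:ℤ) ^ m.card : ℤ) : ℝ) = if s = ∅ then 1 else 0 := by
    rw [Finset.sum_powerset_neg_one_pow_card]; split_ifs <;> simp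
  push_cast at h2
  rw [h2]
  split_ifs with hs
  · simp [hs]
  · simp

lemma pow_filt {ξ η : Finset α} (h : ξ ⊆ η) :
    ξ.powerset = η.powerset.filter (fun ζ => ζ ⊆ ξ) := by
  ext ζ
  simp only [mem_powerset, mem_filter]
  exact ⟨fun hζ => ⟨hζ.trans h, hζ⟩, fun hζ => hζ.2⟩

lemma swap_pow (η : Finset α) (g : Finset α → Finset α → ℝ) :
    ∑ ξ ∈ η.powerset, ∑ ζ ∈ ξ.powerset, g ξ ζ
      = ∑ ζ ∈ η.powerset, ∑ ξ ∈ η.powerset.filter (fun ξ => ζ ⊆ ξ), g ξ ζ := by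
  have h1 : ∑ ξ ∈ η.powerset, ∑ ζ ∈ ξ.powerset, g ξ ζ
      = ∑ ξ ∈ η.powerset, ∑ ζ ∈ η.powerset, if ζ ⊆ ξ then g ξ ζ else 0 := by
    refine sum_congr rfl fun ξ hξ => ?_
    rw [pow_filt (mem_powerset.mp hξ), sum_filter]
  rw [h1, Finset.sum_comm]
  refine sum_congr rfl fun ζ _ => ?_
  rw [sum_filter]

lemma mobius_between {ζ η : Finset α} (hζη : ζ ⊆ η) :
    ∑ ξ ∈ η.powerset.filter (fun ξ => ζ ⊆ ξ), (-1:ℝ) ^ (η \ ξ).card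
      = if ζ = η then 1 else 0 := by
  have key : ∑ ξ ∈ η.powerset.filter (fun ξ => ζ ⊆ ξ), (-1:ℝ) ^ (η \ ξ).card
      = ∑ u ∈ (η \ ζ).powerset, (-1:ℝ) ^ ((η \ ζ) \ u).card := by
    refine Finset.sum_nbij' (fun ξ => ξ \ ζ) (fun u => ζ ∪ u) ?_ ?_ ?_ ?_ ?_
    · intro ξ hξ
      rw [mem_filter, mem_powerset] at hξ
      exact mem_powerset.mpr (sdiff_subset_sdiff hξ.1 le_rfl)
    · intro u hu
      rw [mem_powerset] at hu
      rw [mem_filter, mem_powerset]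
      exact ⟨union_subset hζη (hu.trans sdiff_subset), subset_union_left⟩
    · intro ξ hξ
      rw [mem_filter] at hξ
      exact union_sdiff_of_subset hξ.2
    · intro u hu
      rw [mem_powerset] at hu
      exact union_sdiff_cancel_left (disjoint_sdiff.mono_right hu)
    · intro ξ hξ
      rw [mem_filter, mem_powerset] at hξ
      congr 1
      have : (η \ ζ) \ (ξ \ ζ) = η \ ξ := by
        ext x
        simp only [mem_sdiff]
        constructor
        · rintro ⟨⟨hxη, hxζ⟩, h2⟩
          exact ⟨hxη, fun hxξ => h2 ⟨hxξ, hxζ⟩⟩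
        · rintro ⟨hxη, hxξ⟩
          exact ⟨⟨hxη, fun hxζ => hxξ (hξ.2 hxζ)⟩, fun h => hxξ h.1⟩
      rw [this]
  rw [key, neg_pow_sum]
  have : η \ ζ = ∅ ↔ ζ = η := by
    rw [sdiff_eq_empty_iff_subset]
    exact ⟨fun h => subset_antisymm hζη h, fun h => h ▸ le_rfl⟩
  simp [this]

lemma one_comp (η : Finset α) (g : Finset α → ℝ) :
    ∑ ξ ∈ η.powerset, (-1:ℝ) ^ (η \ ξ).card * ∑ ζ ∈ ξ.powerset, g ζ = g η := by
  have h1 : ∑ ξ ∈ η.powerset, (-1:ℝ) ^ (η \ ξ).card * ∑ ζ ∈ ξ.powerset, g ζ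
      = ∑ ξ ∈ η.powerset, ∑ ζ ∈ ξ.powerset, (-1:ℝ) ^ (η \ ξ).card * g ζ := by
    refine sum_congr rfl fun ξ _ => ?_
    rw [mul_sum]
  rw [h1, swap_pow]
  have h2 : ∀ ζ ∈ η.powerset,
      ∑ ξ ∈ η.powerset.filter (fun ξ => ζ ⊆ ξ), (-1:ℝ) ^ (η \ ξ).card * g ζ
        = (if ζ = η then 1 else 0) * g ζ := by
    intro ζ hζ
    rw [← sum_mul, mobius_between (mem_powerset.mp hζ)]
  rw [sum_congr rfl h2]
  simp only [ite_mul, one_mul, zero_mul]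
  rw [Finset.sum_ite_eq' η.powerset η (fun ζ => g ζ)]
  simp

lemma two_comp (ηp ηm : Finset α) (F : Finset α → Finset α → ℝ) :
    ∑ ξp ∈ ηp.powerset, ∑ ξm ∈ ηm.powerset,
      (-1:ℝ) ^ ((ηp \ ξp).card + (ηm \ ξm).card) *
        ∑ ζp ∈ ξp.powerset, ∑ ζm ∈ ξm.powerset, F ζp ζm = F ηp ηm := by
  have key : ∀ ξp ∈ ηp.powerset,
      ∑ ξm ∈ ηm.powerset, (-1:ℝ) ^ ((ηp \ ξp).card + (ηm \ ξm).card) *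
        ∑ ζp ∈ ξp.powerset, ∑ ζm ∈ ξm.powerset, F ζp ζm
      = (-1:ℝ) ^ (ηp \ ξp).card * ∑ ζp ∈ ξp.powerset, F ζp ηm := by
    intro ξp _
    have h : ∀ ξm ∈ ηm.powerset,
        (-1:ℝ) ^ ((ηp \ ξp).card + (ηm \ ξm).card) *
          ∑ ζp ∈ ξp.powerset, ∑ ζm ∈ ξm.powerset, F ζp ζm
        = (-1:ℝ) ^ (ηp \ ξp).card * ((-1:ℝ) ^ (ηm \ ξm).card *
            ∑ ζm ∈ ξm.powerset, ∑ ζp ∈ ξp.powerset, F ζp ζm) := by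
      intro ξm _
      rw [pow_add, mul_assoc, Finset.sum_comm]
    rw [sum_congr rfl h, ← mul_sum,
      one_comp ηm (fun ζm => ∑ ζp ∈ ξp.powerset, F ζp ζm)]
  rw [sum_congr rfl key]
  exact one_comp ηp (fun ζp => F ζp ηm)

lemma nest_pair (η : Finset α) (g : Finset α → Finset α → ℝ) :
    ∑ ξ ∈ η.powerset, ∑ ζ ∈ ξ.powerset, g ξ ζ
      = ∑ p ∈ (η.powerset ×ˢ η.powerset).filter (fun p => p.2 ⊆ p.1), g p.1 p.2 := by
  rw [sum_filter, sum_product]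
  refine sum_congr rfl fun ξ hξ => ?_
  rw [pow_filt (mem_powerset.mp hξ), sum_filter]

lemma pair_triple (η : Finset α) (g : Finset α → Finset α → ℝ) :
    ∑ ξ ∈ η.powerset, ∑ ζ ∈ ξ.powerset, g ξ ((η \ ξ) ∪ ζ)
      = ∑ t ∈ (η.powerset ×ˢ η.powerset ×ˢ η.powerset).filter
          (fun t => Disjoint t.1 t.2.1 ∧ Disjoint t.1 t.2.2 ∧ Disjoint t.2.1 t.2.2 ∧
            t.1 ∪ t.2.1 ∪ t.2.2 = η),
        g (t.1 ∪ t.2.1) (t.2.1 ∪ t.2.2) := by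
  rw [nest_pair η (fun ξ ζ => g ξ ((η \ ξ) ∪ ζ))]
  refine Finset.sum_nbij' (fun p => (p.1 \ p.2, p.2, η \ p.1))
    (fun t => (t.1 ∪ t.2.1, t.2.1)) ?_ ?_ ?_ ?_ ?_
  · rintro ⟨ξ, ζ⟩ hp
    simp only [mem_filter, mem_product, mem_powerset] at hp ⊢
    obtain ⟨⟨hξη, hζη⟩, hζξ⟩ := hp
    refine ⟨⟨(sdiff_subset).trans hξη, hζη, sdiff_subset⟩, ?_, ?_, ?_, ?_⟩
    · exact sdiff_disjoint
    · exact disjoint_sdiff.mono_left sdiff_subset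
    · exact disjoint_sdiff.mono_left hζξ
    · rw [sdiff_union_of_subset hζξ, union_sdiff_of_subset hξη]
  · rintro ⟨a, b, c⟩ ht
    simp only [mem_filter, mem_product, mem_powerset] at ht ⊢
    obtain ⟨⟨ha, hb, hc⟩, hab, hac, hbc, huni⟩ := ht
    exact ⟨⟨huni ▸ (subset_union_left : a ∪ b ⊆ a ∪ b ∪ c), hb⟩, subset_union_right⟩
  · rintro ⟨ξ, ζ⟩ hp
    simp only [mem_filter, mem_product, mem_powerset] at hp
    obtain ⟨⟨hξη, hζη⟩, hζξ⟩ := hp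
    simp only [Prod.mk.injEq]
    exact ⟨sdiff_union_of_subset hζξ, trivial⟩
  · rintro ⟨a, b, c⟩ ht
    simp only [mem_filter, mem_product, mem_powerset] at ht
    obtain ⟨⟨ha, hb, hc⟩, hab, hac, hbc, huni⟩ := ht
    simp only [Prod.mk.injEq]
    refine ⟨?_, trivial, ?_⟩
    · rw [union_comm, union_sdiff_cancel_left hab.symm]
    · rw [← huni, union_sdiff_cancel_left (disjoint_union_left.mpr ⟨hac, hbc⟩)]
  · rintro ⟨ξ, ζ⟩ hp
    simp only [mem_filter, mem_product, mem_powerset] at hp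
    obtain ⟨⟨hξη, hζη⟩, hζξ⟩ := hp
    simp only []
    rw [sdiff_union_of_subset hζξ, union_comm (η \ ξ) ζ]

lemma nest3 (γ : Finset α) (g3 : Finset α → Finset α → Finset α → ℝ) :
    ∑ η ∈ γ.powerset, ∑ ξ ∈ η.powerset, ∑ ζ ∈ ξ.powerset, g3 η ξ ζ
      = ∑ x ∈ (γ.powerset ×ˢ γ.powerset ×ˢ γ.powerset).filter
          (fun x => x.2.1 ⊆ x.1 ∧ x.2.2 ⊆ x.2.1), g3 x.1 x.2.1 x.2.2 := by
  rw [sum_filter, sum_product]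
  refine sum_congr rfl fun η hη => ?_
  rw [sum_product]
  have h1 : ∀ ξ ∈ γ.powerset,
      ∑ ζ ∈ γ.powerset, (if ξ ⊆ η ∧ ζ ⊆ ξ then g3 η ξ ζ else 0)
        = if ξ ⊆ η then ∑ ζ ∈ ξ.powerset, g3 η ξ ζ else 0 := by
    intro ξ hξ
    split_ifs with hξη
    · rw [pow_filt (mem_powerset.mp hξ), sum_filter]
      refine sum_congr rfl fun ζ _ => ?_
      simp [hξη]
    · refine Finset.sum_eq_zero fun ζ _ => ?_
      simp [hξη]
  rw [sum_congr rfl h1, ← sum_filter, ← pow_filt (mem_powerset.mp hη)]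

lemma triple_collapse (γ : Finset α) (g : Finset α → Finset α → ℝ) :
    ∑ η ∈ γ.powerset, ∑ ξ ∈ η.powerset, ∑ ζ ∈ ξ.powerset, g ξ ((η \ ξ) ∪ ζ)
      = ∑ a ∈ γ.powerset, ∑ b ∈ γ.powerset, g a b := by
  rw [nest3 γ (fun η ξ ζ => g ξ ((η \ ξ) ∪ ζ)), ← sum_product']
  refine Finset.sum_nbij' (fun x => (x.2.1, (x.1 \ x.2.1) ∪ x.2.2))
    (fun p => (p.1 ∪ p.2, p.1, p.1 ∩ p.2)) ?_ ?_ ?_ ?_ ?_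
  · rintro ⟨η, ξ, ζ⟩ hx
    simp only [mem_filter, mem_product, mem_powerset] at hx ⊢
    obtain ⟨⟨hη, hξ, hζ⟩, hξη, hζξ⟩ := hx
    exact ⟨hξ, union_subset (sdiff_subset.trans hη) hζ⟩
  · rintro ⟨a, b⟩ hp
    simp only [mem_product, mem_powerset, mem_filter] at hp ⊢
    exact ⟨⟨union_subset hp.1 hp.2, hp.1, inter_subset_left.trans hp.1⟩,
      subset_union_left, inter_subset_left⟩
  · rintro ⟨η, ξ, ζ⟩ hx
    simp only [mem_filter, mem_product, mem_powerset] at hx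
    obtain ⟨⟨hη, hξ, hζ⟩, hξη, hζξ⟩ := hx
    simp only [Prod.mk.injEq]
    refine ⟨?_, trivial, ?_⟩
    · rw [← union_assoc, union_sdiff_of_subset hξη, union_eq_left]
      exact hζξ.trans hξη
    · rw [inter_union_distrib_left, inter_sdiff_self, inter_eq_right.mpr hζξ, empty_union]
  · rintro ⟨a, b⟩ hp
    simp only [Prod.mk.injEq]
    refine ⟨trivial, ?_⟩
    rw [union_sdiff_left, inter_comm, sdiff_union_inter]
  · intro x _
    rfl

end StarConvAux


section CfgAux
open Finset
variable {d : ℕ}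

lemma starConv_rearrange (G₁ G₂ : Cfg d → Cfg d → ℝ) (ηp ηm : Cfg d) :
    starConv G₁ G₂ ηp ηm
      = ∑ ξp ∈ ηp.powerset, ∑ ζp ∈ ξp.powerset, ∑ ξm ∈ ηm.powerset, ∑ ζm ∈ ξm.powerset,
          G₁ ξp ξm * G₂ ((ηp \ ξp) ∪ ζp) ((ηm \ ξm) ∪ ζm) := by
  unfold starConv
  refine sum_congr rfl fun ξp _ => ?_
  have h : ∀ ξm ∈ ηm.powerset,
      G₁ ξp ξm * ∑ ζp ∈ ξp.powerset, ∑ ζm ∈ ξm.powerset,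
          G₂ ((ηp \ ξp) ∪ ζp) ((ηm \ ξm) ∪ ζm)
        = ∑ ζp ∈ ξp.powerset, ∑ ζm ∈ ξm.powerset,
            G₁ ξp ξm * G₂ ((ηp \ ξp) ∪ ζp) ((ηm \ ξm) ∪ ζm) := by
    intro ξm _
    rw [mul_sum]
    exact sum_congr rfl fun ζp _ => by rw [mul_sum]
  rw [sum_congr rfl h, Finset.sum_comm]

lemma Ktr_starConv (G₁ G₂ : Cfg d → Cfg d → ℝ) (γp γm : Cfg d) :
    Ktr (starConv G₁ G₂) γp γm = Ktr G₁ γp γm * Ktr G₂ γp γm := by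
  unfold Ktr
  have h0 : ∀ ηp ∈ γp.powerset, ∑ ηm ∈ γm.powerset, starConv G₁ G₂ ηp ηm
      = ∑ ξp ∈ ηp.powerset, ∑ ζp ∈ ξp.powerset, ∑ ηm ∈ γm.powerset, ∑ ξm ∈ ηm.powerset,
          ∑ ζm ∈ ξm.powerset, G₁ ξp ξm * G₂ ((ηp \ ξp) ∪ ζp) ((ηm \ ξm) ∪ ζm) := by
    intro ηp _
    rw [sum_congr rfl (fun ηm _ => starConv_rearrange G₁ G₂ ηp ηm), Finset.sum_comm]
    exact sum_congr rfl fun ξp _ => Finset.sum_comm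
  rw [sum_congr rfl h0]
  have h1 : ∀ ηp ∈ γp.powerset, (∑ ξp ∈ ηp.powerset, ∑ ζp ∈ ξp.powerset,
        ∑ ηm ∈ γm.powerset, ∑ ξm ∈ ηm.powerset, ∑ ζm ∈ ξm.powerset,
          G₁ ξp ξm * G₂ ((ηp \ ξp) ∪ ζp) ((ηm \ ξm) ∪ ζm))
      = ∑ ξp ∈ ηp.powerset, ∑ ζp ∈ ξp.powerset, ∑ am ∈ γm.powerset, ∑ bm ∈ γm.powerset,
          G₁ ξp am * G₂ ((ηp \ ξp) ∪ ζp) bm := by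
    intro ηp _
    exact sum_congr rfl fun ξp _ => sum_congr rfl fun ζp _ =>
      triple_collapse γm (fun x y => G₁ ξp x * G₂ ((ηp \ ξp) ∪ ζp) y)
  rw [sum_congr rfl h1,
    triple_collapse γp (fun x y => ∑ am ∈ γm.powerset, ∑ bm ∈ γm.powerset,
      G₁ x am * G₂ y bm), sum_mul_sum]
  exact sum_congr rfl fun ap _ => sum_congr rfl fun bp _ => by rw [sum_mul_sum]

lemma Ktr_unit (e : Cfg d → Cfg d → ℝ) (h1 : e ∅ ∅ = 1)
    (h0 : ∀ a b : Cfg d, ¬(a = ∅ ∧ b = ∅) → e a b = 0) (γp γm : Cfg d) :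
    Ktr e γp γm = 1 := by
  unfold Ktr
  have key : ∀ a ∈ γp.powerset, ∑ b ∈ γm.powerset, e a b = if a = ∅ then 1 else 0 := by
    intro a _
    by_cases ha : a = ∅
    · subst ha
      rw [if_pos rfl]
      have h2 : ∀ b ∈ γm.powerset, e ∅ b = if b = ∅ then (1:ℝ) else 0 := by
        intro b _
        by_cases hb : b = ∅
        · subst hb; rw [if_pos rfl, h1]
        · rw [if_neg hb, h0 ∅ b (by tauto)]
      rw [sum_congr rfl h2, sum_ite_eq' γm.powerset ∅ (fun _ => (1:ℝ)),
        if_pos (empty_mem_powerset γm)]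
    · rw [if_neg ha]
      exact Finset.sum_eq_zero fun b _ => h0 a b (by tauto)
  rw [sum_congr rfl key, sum_ite_eq' γp.powerset ∅ (fun _ => (1:ℝ)),
    if_pos (empty_mem_powerset γp)]

lemma Ktr_ext (F₁ F₂ : Cfg d → Cfg d → ℝ)
    (h : ∀ a b : Cfg d, Ktr F₁ a b = Ktr F₂ a b) (ηp ηm : Cfg d) :
    F₁ ηp ηm = F₂ ηp ηm := by
  rw [← two_comp ηp ηm F₁, ← two_comp ηp ηm F₂]
  refine sum_congr rfl fun ξp _ => sum_congr rfl fun ξm _ => ?_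
  have h2 := h ξp ξm
  unfold Ktr at h2
  rw [h2]

end CfgAux

open Classical in
/-- the `⋆`-convolution: partition form, commutativity, associativity
and unit element. -/
theorem starConv_algebra {d : ℕ} (G₁ G₂ G₃ : Cfg d → Cfg d → ℝ) (ηp ηm : Cfg d) :
    (starConv G₁ G₂ ηp ηm =
      ∑ p ∈ (ηp.powerset ×ˢ ηp.powerset ×ˢ ηp.powerset).filter
          (fun t => Disjoint t.1 t.2.1 ∧ Disjoint t.1 t.2.2 ∧ Disjoint t.2.1 t.2.2 ∧
            t.1 ∪ t.2.1 ∪ t.2.2 = ηp),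
        ∑ q ∈ (ηm.powerset ×ˢ ηm.powerset ×ˢ ηm.powerset).filter
          (fun t => Disjoint t.1 t.2.1 ∧ Disjoint t.1 t.2.2 ∧ Disjoint t.2.1 t.2.2 ∧
            t.1 ∪ t.2.1 ∪ t.2.2 = ηm),
          G₁ (p.1 ∪ p.2.1) (q.1 ∪ q.2.1) * G₂ (p.2.1 ∪ p.2.2) (q.2.1 ∪ q.2.2)) ∧
    starConv G₁ G₂ ηp ηm = starConv G₂ G₁ ηp ηm ∧
    starConv (starConv G₁ G₂) G₃ ηp ηm = starConv G₁ (starConv G₂ G₃) ηp ηm ∧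
    starConv G₁ (fun a b => if a = ∅ ∧ b = ∅ then (1 : ℝ) else 0) ηp ηm
      = G₁ ηp ηm := by
  refine ⟨?_, ?_, ?_, ?_⟩
  · rw [starConv_rearrange,
      sum_congr rfl (fun ξp _ => sum_congr rfl (fun ζp _ =>
        pair_triple ηm (fun x y => G₁ ξp x * G₂ ((ηp \ ξp) ∪ ζp) y)))]
    exact pair_triple ηp (fun x y =>
      ∑ q ∈ (ηm.powerset ×ˢ ηm.powerset ×ˢ ηm.powerset).filter
          (fun t => Disjoint t.1 t.2.1 ∧ Disjoint t.1 t.2.2 ∧ Disjoint t.2.1 t.2.2 ∧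
            t.1 ∪ t.2.1 ∪ t.2.2 = ηm),
        G₁ x (q.1 ∪ q.2.1) * G₂ y (q.2.1 ∪ q.2.2))
  · exact Ktr_ext _ _ (fun a b => by
      rw [Ktr_starConv, Ktr_starConv, mul_comm]) ηp ηm
  · exact Ktr_ext _ _ (fun a b => by
      rw [Ktr_starConv, Ktr_starConv, Ktr_starConv, Ktr_starConv, mul_assoc]) ηp ηm
  · exact Ktr_ext _ _ (fun a b => by
      rw [Ktr_starConv, Ktr_unit _ (by simp) (fun a b hab => if_neg hab), mul_one]) ηp ηm
end
end
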